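/- There exists an isomorphism of abelian groups φ from the quotient F₂'/F₂'' onto the additive group of the Laurent polynomial ring ℤ[X^{±1}, Y^{±1}] (the group ring ℤ[ℤ × ℤ]) such that, for all integers n and m, φ sends the class of x^n y^m [x,y] y^{-m} x^{-n} to the monomial X^n Y^m. (Equivalently, the winding invariant map W : F₂' → ℤ[X^{±1},Y^{±1}] is a surjective group homomorphism with kernel F₂''. This is the Conway–Lagarias theorem.) -/

import Mathlib

open scoped commutatorElement

noncomputable section CL

open AddMonoidAlgebra

variable {G H : Type} [AddCommGroup G] [AddCommGroup H]

/-- monomial -/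
def eg (G : Type) [AddCommGroup G] (u : G) : AddMonoidAlgebra ℤ G :=
  AddMonoidAlgebra.single u 1

lemma eg_zero : eg G 0 = 1 := rfl

lemma eg_mul (u v : G) : eg G u * eg G v = eg G (u + v) := by
  simp [eg, AddMonoidAlgebra.single_mul_single]

lemma eg_mul_neg (u : G) : eg G u * eg G (-u) = 1 := by
  rw [eg_mul, add_neg_cancel, eg_zero]

/-- Magnus-type semidirect product -/
@[ext] structure Mg (G : Type) [AddCommGroup G] where
  d : AddMonoidAlgebra ℤ G
  t : G

instance : Group (Mg G) where
  mul a b := ⟨a.d + eg G a.t * b.d, a.t + b.t⟩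
  one := ⟨0, 0⟩
  inv a := ⟨-(eg G (-a.t) * a.d), -a.t⟩
  mul_assoc a b c := by
    refine Mg.ext ?_ (add_assoc _ _ _)
    show (a.d + eg G a.t * b.d) + eg G (a.t + b.t) * c.d
        = a.d + eg G a.t * (b.d + eg G b.t * c.d)
    rw [← eg_mul]; ring
  one_mul a := by
    refine Mg.ext ?_ (zero_add _)
    show (0 : AddMonoidAlgebra ℤ G) + eg G 0 * a.d = a.d
    rw [eg_zero]; ring
  mul_one a := by
    refine Mg.ext ?_ (add_zero _)
    show a.d + eg G a.t * 0 = a.d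
    ring
  inv_mul_cancel a := by
    refine Mg.ext ?_ (neg_add_cancel _)
    show -(eg G (-a.t) * a.d) + eg G (-a.t) * a.d = (0 : AddMonoidAlgebra ℤ G)
    ring

@[simp] lemma Mg.mul_d (a b : Mg G) : (a * b).d = a.d + eg G a.t * b.d := rfl
@[simp] lemma Mg.mul_t (a b : Mg G) : (a * b).t = a.t + b.t := rfl
@[simp] lemma Mg.one_d : (1 : Mg G).d = 0 := rfl
@[simp] lemma Mg.one_t : (1 : Mg G).t = 0 := rfl
@[simp] lemma Mg.inv_d (a : Mg G) : (a⁻¹).d = -(eg G (-a.t) * a.d) := rfl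
@[simp] lemma Mg.inv_t (a : Mg G) : (a⁻¹).t = -a.t := rfl

/-- conjugation of a `t = 0` element -/
lemma Mg.conj (g : Mg G) (p : AddMonoidAlgebra ℤ G) :
    g * ⟨p, 0⟩ * g⁻¹ = ⟨eg G g.t * p, 0⟩ := by
  refine Mg.ext ?_ (by simp)
  show (g.d + eg G g.t * p) + eg G (g.t + 0) * (-(eg G (-g.t) * g.d)) = eg G g.t * p
  rw [add_zero]
  ring_nf
  rw [mul_assoc g.d, eg_mul_neg, mul_one]
  ring

/-- second projection as a hom -/
def sndHom (G : Type) [AddCommGroup G] : Mg G →* Multiplicative G :=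
  MonoidHom.mk' (fun a => Multiplicative.ofAdd a.t) (fun _ _ => rfl)

/-- functoriality -/
def mgMap (f : G →+ H) : Mg G →* Mg H :=
  MonoidHom.mk' (fun a => ⟨AddMonoidAlgebra.mapDomainRingHom ℤ f a.d, f a.t⟩)
    (by
      intro a b
      refine Mg.ext ?_ (by simp)
      show AddMonoidAlgebra.mapDomainRingHom ℤ f (a.d + eg G a.t * b.d)
        = AddMonoidAlgebra.mapDomainRingHom ℤ f a.d +
          eg H (f a.t) * AddMonoidAlgebra.mapDomainRingHom ℤ f b.d
      rw [map_add, map_mul]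
      congr 1
      congr 1
      show AddMonoidAlgebra.mapDomain f (AddMonoidAlgebra.single a.t 1) = _
      rw [AddMonoidAlgebra.mapDomain_single]
      rfl)

@[simp] lemma mgMap_d (f : G →+ H) (a : Mg G) :
    (mgMap f a).d = AddMonoidAlgebra.mapDomainRingHom ℤ f a.d := rfl
@[simp] lemma mgMap_t (f : G →+ H) (a : Mg G) : (mgMap f a).t = f a.t := rfl

section Free

abbrev F2 := FreeGroup (Fin 2)
abbrev R2 := AddMonoidAlgebra ℤ (ℤ × ℤ)
abbrev R1 := AddMonoidAlgebra ℤ ℤ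

def xx : F2 := FreeGroup.of 0
def yy : F2 := FreeGroup.of 1

/-- the Magnus homomorphism -/
def Φ : F2 →* Mg (ℤ × ℤ) :=
  FreeGroup.lift ![⟨1, (1, 0)⟩, ⟨0, (0, 1)⟩]

@[simp] lemma Φ_x : Φ xx = ⟨1, (1, 0)⟩ := by simp [Φ, xx]
@[simp] lemma Φ_y : Φ yy = ⟨0, (0, 1)⟩ := by simp [Φ, yy]

def t₀ : R2 := 1 - eg (ℤ × ℤ) (0, 1)

lemma Φ_comm : Φ ⁅xx, yy⁆ = ⟨t₀, 0⟩ := by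
  simp only [commutatorElement_def, map_mul, map_inv]
  refine Mg.ext ?_ ?_
  · simp only [Φ_x, Φ_y, Mg.mul_d, Mg.mul_t, Mg.inv_d, Mg.inv_t, mul_zero, mul_one,
      mul_neg, add_zero, zero_add, neg_neg, neg_zero]
    rw [eg_mul]
    rw [show ((1:ℤ),(0:ℤ)) + ((0:ℤ),(1:ℤ)) + -((1:ℤ),(0:ℤ)) = ((0:ℤ),(1:ℤ)) by
      simp [Prod.ext_iff]]
    rw [t₀]
    ring
  · simp only [Φ_x, Φ_y, Mg.mul_t, Mg.inv_t]
    simp [Prod.ext_iff]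

lemma ab_xnym (n m : ℤ) : (Φ (xx ^ n * yy ^ m)).t = (n, m) := by
  have h : ((sndHom (ℤ × ℤ)).comp Φ) (xx ^ n * yy ^ m)
      = Multiplicative.ofAdd (n, m) := by
    rw [map_mul, map_zpow, map_zpow]
    have hx : ((sndHom (ℤ × ℤ)).comp Φ) xx = Multiplicative.ofAdd ((1:ℤ), (0:ℤ)) := by
      show sndHom (ℤ × ℤ) (Φ xx) = _; rw [Φ_x]; rfl
    have hy : ((sndHom (ℤ × ℤ)).comp Φ) yy = Multiplicative.ofAdd ((0:ℤ), (1:ℤ)) := by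
      show sndHom (ℤ × ℤ) (Φ yy) = _; rw [Φ_y]; rfl
    rw [hx, hy, ← ofAdd_zsmul, ← ofAdd_zsmul, ← ofAdd_add]
    congr 1
    simp [Prod.ext_iff]
  exact Multiplicative.ofAdd.injective h

lemma one_sub_eg_ne {u : G} (hu : u ≠ 0) : 1 - eg G u ≠ 0 := by
  intro h
  rw [sub_eq_zero, AddMonoidAlgebra.one_def, eg] at h
  have h' : Finsupp.single (0 : G) (1 : ℤ) = Finsupp.single u 1 := congrArg AddMonoidAlgebra.coeff h
  rcases (Finsupp.single_eq_single_iff _ _ _ _).1 h' with ⟨h0, -⟩ | ⟨h1, -⟩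
  · exact hu h0.symm
  · norm_num at h1

lemma ht₀ : t₀ ≠ 0 := one_sub_eg_ne (by simp [Prod.ext_iff])

def η : R2 →+* R1 := AddMonoidAlgebra.mapDomainRingHom ℤ (AddMonoidHom.fst ℤ ℤ)
def σr : R1 →+* R2 := AddMonoidAlgebra.mapDomainRingHom ℤ (AddMonoidHom.inl ℤ ℤ)

lemma η_single (u : ℤ × ℤ) (c : ℤ) :
    η (AddMonoidAlgebra.single u c) = AddMonoidAlgebra.single u.1 c := by
  show AddMonoidAlgebra.mapDomain _ _ = _
  rw [AddMonoidAlgebra.mapDomain_single]; rfl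

lemma σr_single (n : ℤ) (c : ℤ) :
    σr (AddMonoidAlgebra.single n c) = AddMonoidAlgebra.single (n, 0) c := by
  show AddMonoidAlgebra.mapDomain _ _ = _
  rw [AddMonoidAlgebra.mapDomain_single]; rfl

def θm : Mg (ℤ × ℤ) →* Mg ℤ := mgMap (AddMonoidHom.fst ℤ ℤ)

def N1 : Subgroup (Mg ℤ) where
  carrier := {a | (eg ℤ 1 - 1) * a.d = eg ℤ a.t - 1}
  one_mem' := by simp [eg_zero]
  mul_mem' := by
    intro a b ha hb
    show (eg ℤ 1 - 1) * (a * b).d = eg ℤ (a * b).t - 1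
    rw [Mg.mul_d, Mg.mul_t]
    have : (eg ℤ 1 - 1) * (a.d + eg ℤ a.t * b.d)
        = (eg ℤ 1 - 1) * a.d + eg ℤ a.t * ((eg ℤ 1 - 1) * b.d) := by ring
    rw [this, ha, hb, mul_sub, mul_one, eg_mul]
    ring
  inv_mem' := by
    intro a ha
    show (eg ℤ 1 - 1) * (a⁻¹).d = eg ℤ (a⁻¹).t - 1
    rw [Mg.inv_d, Mg.inv_t]
    have : (eg ℤ 1 - 1) * -(eg ℤ (-a.t) * a.d)
        = -(eg ℤ (-a.t) * ((eg ℤ 1 - 1) * a.d)) := by ring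
    rw [this, ha, mul_sub, mul_one, eg_mul, neg_add_cancel, eg_zero]
    ring

lemma mem_N1 {a : Mg ℤ} : a ∈ N1 ↔ (eg ℤ 1 - 1) * a.d = eg ℤ a.t - 1 := Iff.rfl

lemma hN (w : F2) : θm (Φ w) ∈ N1 := by
  refine FreeGroup.induction_on (C := fun w => θm (Φ w) ∈ N1) w ?_ ?_ ?_ ?_
  · show θm (Φ 1) ∈ N1
    rw [map_one, map_one]; exact N1.one_mem
  · intro i
    fin_cases i
    · show θm (Φ xx) ∈ N1
      rw [Φ_x, mem_N1]
      show (eg ℤ 1 - 1) * η 1 = eg ℤ 1 - 1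
      rw [map_one, mul_one]
    · show θm (Φ yy) ∈ N1
      rw [Φ_y, mem_N1]
      show (eg ℤ 1 - 1) * η 0 = eg ℤ ((0:ℤ)) - 1
      rw [map_zero, mul_zero]
      show (0 : R1) = eg ℤ 0 - 1
      rw [eg_zero]; ring
  · intro i h
    show θm (Φ (FreeGroup.of i)⁻¹) ∈ N1
    rw [map_inv, map_inv]
    exact N1.inv_mem h
  · intro u v hu hv
    show θm (Φ (u * v)) ∈ N1
    rw [map_mul, map_mul]
    exact N1.mul_mem hu hv

lemma Φt_eq_zero {w : F2} (hw : w ∈ commutator F2) : (Φ w).t = 0 := by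
  have := Abelianization.commutator_subset_ker ((sndHom (ℤ × ℤ)).comp Φ) hw
  rw [MonoidHom.mem_ker] at this
  exact Multiplicative.ofAdd.injective this

lemma η_Φd_eq_zero {w : F2} (hw : w ∈ commutator F2) : η ((Φ w).d) = 0 := by
  have h1 := (mem_N1.1 (hN w))
  rw [show (θm (Φ w)).t = ((Φ w).t).1 from rfl, Φt_eq_zero hw] at h1
  have h2 : (θm (Φ w)).d = η ((Φ w).d) := rfl
  rw [h2] at h1
  rw [show ((0 : ℤ × ℤ)).1 = (0:ℤ) from rfl, eg_zero, sub_self] at h1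
  have hne : eg ℤ 1 - 1 ≠ 0 := by
    intro h
    apply one_sub_eg_ne (G := ℤ) (u := 1) (by norm_num)
    rw [← neg_sub]
    exact neg_eq_zero.2 h
  rcases mul_eq_zero.1 h1 with h | h
  · exact absurd h hne
  · exact h

lemma dvd_one_sub_eg (m : ℤ) : t₀ ∣ 1 - eg (ℤ × ℤ) (0, m) := by
  induction m using Int.induction_on with
  | zero =>
    rw [show ((0:ℤ), (0:ℤ)) = 0 from rfl, eg_zero, sub_self]
    exact dvd_zero _
  | succ k ih =>
    have key : 1 - eg (ℤ × ℤ) (0, (k:ℤ) + 1)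
        = (1 - eg (ℤ × ℤ) (0, (k:ℤ))) + eg (ℤ × ℤ) (0, (k:ℤ)) * t₀ := by
      rw [t₀, mul_sub, mul_one, eg_mul,
        show ((0:ℤ), (k:ℤ)) + ((0:ℤ), (1:ℤ)) = ((0:ℤ), (k:ℤ)+1) by simp]
      ring
    rw [key]
    exact dvd_add ih (Dvd.intro_left _ rfl)
  | pred k ih =>
    have key : 1 - eg (ℤ × ℤ) (0, -(k:ℤ) - 1)
        = (1 - eg (ℤ × ℤ) (0, -(k:ℤ))) - eg (ℤ × ℤ) (0, -(k:ℤ) - 1) * t₀ := by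
      rw [t₀, mul_sub, mul_one, eg_mul,
        show ((0:ℤ), -(k:ℤ)-1) + ((0:ℤ), (1:ℤ)) = ((0:ℤ), -(k:ℤ)) by simp]
      ring
    rw [key]
    exact dvd_sub ih (Dvd.intro_left _ rfl)

lemma key_dvd {p : R2} (hp : η p = 0) : t₀ ∣ p := by
  have claim : ∀ p : R2, t₀ ∣ p - σr (η p) := by
    intro p
    refine AddMonoidAlgebra.induction_on (motive := fun q : R2 => t₀ ∣ q - σr (η q)) p ?_ ?_ ?_
    · intro g
      rw [AddMonoidAlgebra.of_apply, toAdd_ofAdd, η_single, σr_single]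
      have hfac : (AddMonoidAlgebra.single g (1:ℤ) : R2) - AddMonoidAlgebra.single (g.1, 0) 1
          = -(AddMonoidAlgebra.single (g.1, (0:ℤ)) (1:ℤ) * (1 - eg (ℤ × ℤ) (0, g.2))) := by
        rw [mul_sub, mul_one, eg]
        rw [AddMonoidAlgebra.single_mul_single, mul_one,
          show (g.1, (0:ℤ)) + ((0:ℤ), g.2) = g by simp]
        ring
      rw [hfac]
      exact dvd_neg.2 ((dvd_one_sub_eg g.2).mul_left _)
    · intro f g hf hg
      rw [map_add, map_add]
      have : f + g - (σr (η f) + σr (η g)) = (f - σr (η f)) + (g - σr (η g)) := by ring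
      rw [this]
      exact dvd_add hf hg
    · intro r f hf
      rw [map_zsmul, map_zsmul, ← smul_sub, zsmul_eq_mul]
      exact hf.mul_left _
  have := claim p
  rw [hp, map_zero, sub_zero] at this
  exact this

lemma hdvd {w : F2} (hw : w ∈ commutator F2) : ∃ c : R2, (Φ w).d = t₀ * c :=
  key_dvd (η_Φd_eq_zero hw)

/-! ### The winding invariant on the commutator subgroup -/

def Wfun (w : ↥(commutator F2)) : R2 := (hdvd w.2).choose

lemma Wfun_spec (w : ↥(commutator F2)) : (Φ (w : F2)).d = t₀ * Wfun w :=
  (hdvd w.2).choose_spec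

lemma Wfun_unique {w : ↥(commutator F2)} {c : R2} (h : (Φ (w : F2)).d = t₀ * c) :
    Wfun w = c :=
  mul_left_cancel₀ ht₀ ((Wfun_spec w).symm.trans h)

lemma Wfun_mul (a b : ↥(commutator F2)) : Wfun (a * b) = Wfun a + Wfun b := by
  apply Wfun_unique
  have hco : ((a * b : ↥(commutator F2)) : F2) = (a : F2) * (b : F2) := rfl
  rw [hco, map_mul, Mg.mul_d, Φt_eq_zero a.2, eg_zero, one_mul, Wfun_spec a, Wfun_spec b]
  ring

def Wc : ↥(commutator F2) →* Multiplicative R2 :=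
  MonoidHom.mk' (fun w => Multiplicative.ofAdd (Wfun w)) (by
    intro a b
    show Multiplicative.ofAdd (Wfun (a * b)) = _
    rw [Wfun_mul]
    rfl)

def Wbar : Abelianization ↥(commutator F2) →* Multiplicative R2 :=
  Abelianization.lift Wc

/-! ### squares -/

def sqw (n m : ℤ) : F2 := xx ^ n * yy ^ m * ⁅xx, yy⁆ * yy ^ (-m) * xx ^ (-n)

lemma hsq_conj (n m : ℤ) : sqw n m = (xx ^ n * yy ^ m) * ⁅xx, yy⁆ * (xx ^ n * yy ^ m)⁻¹ := by
  rw [sqw]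
  group

lemma hc_mem : ⁅xx, yy⁆ ∈ commutator F2 := by
  rw [commutator_def]
  exact Subgroup.commutator_mem_commutator (Subgroup.mem_top _) (Subgroup.mem_top _)

lemma hsq_mem (n m : ℤ) : sqw n m ∈ commutator F2 := by
  rw [hsq_conj]
  exact Subgroup.Normal.conj_mem inferInstance _ hc_mem _

lemma hΦ_conj (g : F2) : Φ (g * ⁅xx, yy⁆ * g⁻¹) = ⟨t₀ * eg (ℤ × ℤ) (Φ g).t, 0⟩ := by
  rw [map_mul, map_mul, map_inv, Φ_comm, Mg.conj]
  exact Mg.ext (mul_comm _ _) rfl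

lemma hΦ_sqw (n m : ℤ) : Φ (sqw n m) = ⟨t₀ * eg (ℤ × ℤ) (n, m), 0⟩ := by
  rw [hsq_conj, hΦ_conj, ab_xnym]

def sqcl (u : ℤ × ℤ) : Abelianization ↥(commutator F2) :=
  Abelianization.of ⟨sqw u.1 u.2, hsq_mem u.1 u.2⟩

lemma hWc_sq (u : ℤ × ℤ) :
    Wc ⟨sqw u.1 u.2, hsq_mem u.1 u.2⟩ = Multiplicative.ofAdd (eg (ℤ × ℤ) u) := by
  show Multiplicative.ofAdd (Wfun _) = _
  congr 1
  apply Wfun_unique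
  show (Φ (sqw u.1 u.2)).d = _
  rw [hΦ_sqw]

/-! ### the inverse map -/

def ψ0 : R2 →+ Additive (Abelianization ↥(commutator F2)) :=
  (Finsupp.liftAddHom (fun u => zmultiplesHom _ (Additive.ofMul (sqcl u)))).comp
    AddMonoidAlgebra.coeffAddEquiv.toAddMonoidHom

def ψm : Multiplicative R2 →* Abelianization ↥(commutator F2) :=
  AddMonoidHom.toMultiplicativeLeft ψ0

lemma ψm_single (u : ℤ × ℤ) (c : ℤ) :
    ψm (Multiplicative.ofAdd (AddMonoidAlgebra.single u c)) = (sqcl u) ^ c := by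
  show Additive.toMul ((Finsupp.liftAddHom (fun u => zmultiplesHom _ (Additive.ofMul (sqcl u))))
    (Finsupp.single u c)) = _
  erw [Finsupp.liftAddHom_apply_single]
  show Additive.toMul (c • Additive.ofMul (sqcl u)) = _
  rw [toMul_zsmul, toMul_ofMul]

lemma hRI (r : R2) : Wbar (ψm (Multiplicative.ofAdd r)) = Multiplicative.ofAdd r := by
  refine AddMonoidAlgebra.induction_on
    (motive := fun r : R2 => Wbar (ψm (Multiplicative.ofAdd r)) = Multiplicative.ofAdd r) r ?_ ?_ ?_
  · intro g
    rw [AddMonoidAlgebra.of_apply, toAdd_ofAdd, ψm_single, zpow_one]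
    show Wbar (Abelianization.of _) = _
    rw [Wbar, Abelianization.lift_apply_of, hWc_sq]
    rfl
  · intro f g hf hg
    rw [ofAdd_add, map_mul, map_mul, hf, hg]
  · intro c f hf
    rw [ofAdd_zsmul, map_zpow, map_zpow, hf]

/-! ### the kernel argument -/

lemma mem_of_abzero {w : F2} (hw : (Φ w).t = 0) : w ∈ commutator F2 := by
  classical
  set βf : Multiplicative (ℤ × ℤ) →* Abelianization F2 :=
    MonoidHom.mk' (fun u => (Abelianization.of xx) ^ (u.toAdd.1) *
      (Abelianization.of yy) ^ (u.toAdd.2)) (by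
      intro a b
      show (Abelianization.of xx) ^ ((a.toAdd + b.toAdd).1) *
          (Abelianization.of yy) ^ ((a.toAdd + b.toAdd).2) = _
      rw [Prod.fst_add, Prod.snd_add, zpow_add, zpow_add, mul_mul_mul_comm]) with hβf
  have hβ : βf.comp ((sndHom (ℤ × ℤ)).comp Φ) = Abelianization.of := by
    refine FreeGroup.ext_hom _ _ ?_
    intro i
    fin_cases i
    · show βf (sndHom (ℤ × ℤ) (Φ xx)) = Abelianization.of xx
      rw [Φ_x]
      show (Abelianization.of xx) ^ (1:ℤ) * (Abelianization.of yy) ^ (0:ℤ) = _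
      simp
    · show βf (sndHom (ℤ × ℤ) (Φ yy)) = Abelianization.of yy
      rw [Φ_y]
      show (Abelianization.of xx) ^ (0:ℤ) * (Abelianization.of yy) ^ (1:ℤ) = _
      simp
  have h1 : Abelianization.of w = 1 := by
    rw [← hβ]
    show βf (sndHom (ℤ × ℤ) (Φ w)) = 1
    have : sndHom (ℤ × ℤ) (Φ w) = 1 := by
      show Multiplicative.ofAdd (Φ w).t = 1
      rw [hw]
      rfl
    rw [this, map_one]
  exact (QuotientGroup.eq_one_iff w).1 h1

lemma hNC : commutator F2 = Subgroup.normalClosure {⁅xx, yy⁆} := by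
  refine le_antisymm ?_ (Subgroup.normalClosure_le_normal (by
    intro z hz
    rw [Set.mem_singleton_iff] at hz
    rw [hz]
    exact hc_mem))
  rw [commutator_def, Subgroup.commutator_le]
  intro u _ v _
  set N := Subgroup.normalClosure ({⁅xx, yy⁆} : Set F2)
  refine (QuotientGroup.eq_one_iff _).1 ?_
  rw [show ((⁅u, v⁆ : F2) : F2 ⧸ N) = (QuotientGroup.mk' N) ⁅u, v⁆ from rfl,
    map_commutatorElement]
  have hq1 : (QuotientGroup.mk' N) ⁅xx, yy⁆ = 1 :=
    (QuotientGroup.eq_one_iff _).2 (Subgroup.subset_normalClosure (Set.mem_singleton _))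
  have hcomm : Commute ((QuotientGroup.mk' N) xx) ((QuotientGroup.mk' N) yy) :=
    commutatorElement_eq_one_iff_commute.1 (by rw [← map_commutatorElement]; exact hq1)
  have htop : Subgroup.closure ((QuotientGroup.mk' N) '' Set.range (FreeGroup.of : Fin 2 → F2))
      = ⊤ := by
    rw [← MonoidHom.map_closure, FreeGroup.closure_range_of, ← MonoidHom.range_eq_map,
      MonoidHom.range_eq_top]
    exact QuotientGroup.mk'_surjective N
  have hall : ∀ a b : F2 ⧸ N, Commute a b := by
    intro a b
    have ha : a ∈ Subgroup.closure ((QuotientGroup.mk' N) '' Set.range FreeGroup.of) :=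
      htop.symm ▸ Subgroup.mem_top a
    have hb : b ∈ Subgroup.closure ((QuotientGroup.mk' N) '' Set.range FreeGroup.of) :=
      htop.symm ▸ Subgroup.mem_top b
    refine Subgroup.closure_induction₂
      (p := fun a b _ _ => Commute a b) ?_ ?_ ?_ ?_ ?_ ?_ ?_ ha hb
    · rintro _ _ ⟨_, ⟨i, rfl⟩, rfl⟩ ⟨_, ⟨j, rfl⟩, rfl⟩
      fin_cases i <;> fin_cases j
      · exact Commute.refl _
      · exact hcomm
      · exact hcomm.symm
      · exact Commute.refl _
    · intro z _; exact Commute.one_left z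
    · intro z _; exact Commute.one_right z
    · intro a b z _ _ _ h1 h2; exact h1.mul_left h2
    · intro a b z _ _ _ h1 h2; exact h1.mul_right h2
    · intro a b _ _ h; exact h.inv_left
    · intro a b _ _ h; exact h.inv_right
  exact commutatorElement_eq_one_iff_commute.2 (hall _ _)


/-! ### conjugation on the abelianization -/

def conjK (t : F2) : ↥(commutator F2) →* ↥(commutator F2) :=
  MonoidHom.mk' (fun z => ⟨t * (z : F2) * t⁻¹,
      Subgroup.Normal.conj_mem inferInstance _ z.2 t⟩)
    (by
      intro a b
      refine Subtype.ext ?_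
      show t * ((a : F2) * (b : F2)) * t⁻¹ = (t * a * t⁻¹) * (t * b * t⁻¹)
      group)

/-! ### left-inverse identity -/

lemma key (w : F2) (h : w ∈ commutator F2) :
    ψm (Wc ⟨w, h⟩) = Abelianization.of ⟨w, h⟩ := by
  have h' : w ∈ Subgroup.closure (Group.conjugatesOfSet ({⁅xx, yy⁆} : Set F2)) := by
    have : w ∈ Subgroup.normalClosure ({⁅xx, yy⁆} : Set F2) := hNC ▸ h
    exact this
  refine Subgroup.closure_induction
    (p := fun w _ => ∀ h : w ∈ commutator F2, ψm (Wc ⟨w, h⟩) = Abelianization.of ⟨w, h⟩)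
    ?_ ?_ ?_ ?_ h' h
  · -- conjugates of the commutator
    intro v hv
    rcases Group.mem_conjugatesOfSet_iff.1 hv with ⟨a, ha, hconj⟩
    rw [Set.mem_singleton_iff] at ha
    subst ha
    rcases isConj_iff.1 hconj with ⟨g, hg⟩
    subst hg
    intro hmem
    -- LHS
    have hL : Wc ⟨g * ⁅xx, yy⁆ * g⁻¹, hmem⟩
        = Multiplicative.ofAdd (AddMonoidAlgebra.single ((Φ g).t) (1:ℤ)) := by
      show Multiplicative.ofAdd (Wfun _) = _
      congr 1
      apply Wfun_unique
      show (Φ (g * ⁅xx, yy⁆ * g⁻¹)).d = _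
      rw [hΦ_conj]
      rfl
    rw [hL, ψm_single, zpow_one]
    -- RHS
    set n := (Φ g).t.1
    set m := (Φ g).t.2
    set t : F2 := xx ^ n * yy ^ m with ht
    have habg : (Φ t).t = (Φ g).t := by rw [ht, ab_xnym]
    have hu : t⁻¹ * g ∈ commutator F2 := by
      apply mem_of_abzero
      rw [map_mul, map_inv, Mg.mul_t, Mg.inv_t, habg]
      simp
    have hz : (⟨g * ⁅xx, yy⁆ * g⁻¹, hmem⟩ : ↥(commutator F2))
        = conjK t ((⟨t⁻¹ * g, hu⟩ : ↥(commutator F2)) * ⟨⁅xx, yy⁆, hc_mem⟩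
            * (⟨t⁻¹ * g, hu⟩ : ↥(commutator F2))⁻¹) := by
      refine Subtype.ext ?_
      show g * ⁅xx, yy⁆ * g⁻¹ = t * ((t⁻¹ * g) * ⁅xx, yy⁆ * (t⁻¹ * g)⁻¹) * t⁻¹
      group
    have habel : Abelianization.of ((⟨t⁻¹ * g, hu⟩ : ↥(commutator F2)) * ⟨⁅xx, yy⁆, hc_mem⟩
        * (⟨t⁻¹ * g, hu⟩ : ↥(commutator F2))⁻¹) = Abelianization.of ⟨⁅xx, yy⁆, hc_mem⟩ := by
      rw [map_mul, map_mul, map_inv, mul_inv_cancel_comm]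
    rw [hz, ← Abelianization.map_of, habel, Abelianization.map_of]
    show sqcl ((Φ g).t) = _
    rw [sqcl]
    congr 1
    refine Subtype.ext ?_
    show sqw n m = t * ⁅xx, yy⁆ * t⁻¹
    rw [hsq_conj]
  · intro h1
    have : (⟨(1 : F2), h1⟩ : ↥(commutator F2)) = 1 := Subtype.ext rfl
    rw [this, map_one, map_one, map_one]
  · intro a b ha hb iha ihb h
    have ha' : a ∈ commutator F2 := by
      rw [hNC]; exact ha
    have hb' : b ∈ commutator F2 := by
      rw [hNC]; exact hb
    have : (⟨a * b, h⟩ : ↥(commutator F2)) = ⟨a, ha'⟩ * ⟨b, hb'⟩ := Subtype.ext rfl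
    rw [this, map_mul, map_mul, map_mul, iha ha', ihb hb']
  · intro a ha iha h
    have ha' : a ∈ commutator F2 := by
      rw [hNC]; exact ha
    have : (⟨a⁻¹, h⟩ : ↥(commutator F2)) = (⟨a, ha'⟩)⁻¹ := Subtype.ext rfl
    rw [this, map_inv, map_inv, map_inv, iha ha']

lemma hLI (a : Abelianization ↥(commutator F2)) : ψm (Wbar a) = a := by
  have hh : ψm.comp Wbar = MonoidHom.id _ := by
    refine Abelianization.hom_ext _ _ ?_
    refine MonoidHom.ext fun z => ?_
    show ψm (Wbar (Abelianization.of z)) = Abelianization.of z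
    rw [Wbar, Abelianization.lift_apply_of]
    have := key (z : F2) z.2
    simpa using this
  exact DFunLike.congr_fun hh a

def φiso : Abelianization ↥(commutator F2) ≃* Multiplicative R2 where
  toFun := Wbar
  invFun := ψm
  left_inv := hLI
  right_inv := fun r => hRI r.toAdd
  map_mul' := map_mul Wbar

end Free

end CL

theorem stmt_4 :
    ∃ φ : Abelianization ↥(commutator (FreeGroup (Fin 2))) ≃*
        Multiplicative (AddMonoidAlgebra ℤ (ℤ × ℤ)),
      ∀ (n m : ℤ) (w : ↥(commutator (FreeGroup (Fin 2)))),
        (w : FreeGroup (Fin 2)) =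
          FreeGroup.of (0 : Fin 2) ^ n * FreeGroup.of (1 : Fin 2) ^ m *
            ⁅FreeGroup.of (0 : Fin 2), FreeGroup.of (1 : Fin 2)⁆ *
            FreeGroup.of (1 : Fin 2) ^ (-m) * FreeGroup.of (0 : Fin 2) ^ (-n) →
        φ (Abelianization.of w) =
          Multiplicative.ofAdd (AddMonoidAlgebra.single (n, m) (1 : ℤ)) := by
  refine ⟨φiso, ?_⟩
  intro n m w hw
  show Wbar (Abelianization.of w) = _
  rw [Wbar, Abelianization.lift_apply_of]
  show Multiplicative.ofAdd (Wfun w) = _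
  congr 1
  apply Wfun_unique
  rw [hw]
  show (Φ (sqw n m)).d = t₀ * AddMonoidAlgebra.single (n, m) 1
  rw [hΦ_sqw]
  rfl
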